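/- Let λ ∈ (0,1) satisfy the equation αλ(λ-1)² + ρ(λ-1)² - √(1-κ²)·ζ·λ(λ-1) - (1/2)κ²σ_Z²λ = 0, and define u(y) = ((λ-1)/λ)(1+y)^(λ/(λ-1)) for y ≥ 0. Then u is a classical solution of the ODE -α(u'(y))²/u''(y) + √(1-κ²)·ζ·(y+1)u'(y) + (1/2)σ_Z²κ²(y+1)²u''(y) = ρu(y) for all y > 0, and satisfies the Neumann boundary condition u'(0) = 1. -/

import Mathlib

/-- With λ ∈ (0,1) a root of the cubic, u(y) = ((λ-1)/λ)(1+y)^(λ/(λ-1))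
is a classical solution of the reduced HJB equation
-α(u')²/u'' + √(1-κ²)ζ(y+1)u' + (1/2)σ_Z²κ²(y+1)²u'' = ρu on (0,∞),
with Neumann boundary condition u'(0) = 1. -/
theorem explicit_solution_of_HJB
    (α ρ σZ κ ζ lam : ℝ) (hα : 0 < α) (hρ : 0 < ρ) (hσZ : 0 < σZ)
    (hκ : κ ∈ Set.Icc (-1 : ℝ) 1) (hlam : lam ∈ Set.Ioo (0 : ℝ) 1)
    (hroot : α * lam * (lam - 1) ^ 2 + ρ * (lam - 1) ^ 2
      - Real.sqrt (1 - κ ^ 2) * ζ * lam * (lam - 1) - (1 / 2) * κ ^ 2 * σZ ^ 2 * lam = 0)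
    (u u' u'' : ℝ → ℝ)
    (hu : ∀ y : ℝ, u y = ((lam - 1) / lam) * (1 + y) ^ (lam / (lam - 1)))
    (hu' : ∀ y : ℝ, u' y = (1 + y) ^ (1 / (lam - 1)))
    (hu'' : ∀ y : ℝ, u'' y = (1 / (lam - 1)) * (1 + y) ^ ((2 - lam) / (lam - 1))) :
    (∀ y ≥ (0 : ℝ), HasDerivAt u (u' y) y) ∧
    (∀ y ≥ (0 : ℝ), HasDerivAt u' (u'' y) y) ∧
    (∀ y > (0 : ℝ),
      -α * (u' y) ^ 2 / u'' y + Real.sqrt (1 - κ ^ 2) * ζ * (y + 1) * u' y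
        + (1 / 2) * σZ ^ 2 * κ ^ 2 * (y + 1) ^ 2 * u'' y = ρ * u y) ∧
    u' 0 = 1 := by
  obtain ⟨hl0, hl1⟩ := hlam
  have h1 : lam - 1 ≠ 0 := by intro h; linarith [sub_eq_zero.mp h]
  have h0 : lam ≠ 0 := ne_of_gt hl0
  refine ⟨?_, ?_, ?_, ?_⟩
  · intro y hy
    have hx : (0:ℝ) < 1 + y := by linarith
    have hd : HasDerivAt (fun y : ℝ => 1 + y) 1 y := by
      simpa using (hasDerivAt_id y).const_add 1
    have hD := (hd.rpow_const (p := lam / (lam - 1)) (Or.inl hx.ne')).const_mul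
      ((lam - 1) / lam)
    have hfun : u = fun y : ℝ => ((lam - 1) / lam) * (1 + y) ^ (lam / (lam - 1)) :=
      funext hu
    rw [hfun, hu']
    refine hD.congr_deriv ?_
    have he : lam / (lam - 1) - 1 = 1 / (lam - 1) := by field_simp; ring
    rw [he]
    field_simp
  · intro y hy
    have hx : (0:ℝ) < 1 + y := by linarith
    have hd : HasDerivAt (fun y : ℝ => 1 + y) 1 y := by
      simpa using (hasDerivAt_id y).const_add 1
    have hD := hd.rpow_const (p := 1 / (lam - 1)) (Or.inl hx.ne')
    have hfun : u' = fun y : ℝ => (1 + y) ^ (1 / (lam - 1)) := funext hu'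
    rw [hfun, hu'']
    convert hD using 1
    have he : 1 / (lam - 1) - 1 = (2 - lam) / (lam - 1) := by field_simp; ring
    rw [he]; ring
  · intro y hy
    have hx : (0:ℝ) < 1 + y := by linarith
    set A := (1 + y) ^ (1 / (lam - 1)) with hAdef
    have hA : 0 < A := Real.rpow_pos_of_pos hx _
    have hEu : (1 + y) ^ (lam / (lam - 1)) = A * (1 + y) := by
      rw [show lam / (lam - 1) = 1 / (lam - 1) + 1 by field_simp; ring,
        Real.rpow_add hx, Real.rpow_one]
    have hEu'' : (1 + y) ^ ((2 - lam) / (lam - 1)) = A / (1 + y) := by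
      rw [show (2 - lam) / (lam - 1) = 1 / (lam - 1) - 1 by field_simp; ring,
        Real.rpow_sub hx, Real.rpow_one]
    rw [hu, hu', hu'', hEu, hEu'']
    have hAne := hA.ne'
    have hxne := hx.ne'
    simp only [← hAdef]
    field_simp
    ring_nf
    linear_combination (-2*(1+y)^2) * hroot
  · rw [hu']
    simp
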